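/- Let α be an ideal norm on L(ℓ₂ⁿ, ·) and β an ideal norm on L(·, ℓ₂ⁿ). Then (1) α(ι_{2,∞}ⁿ) · 1-π₂ⁿ(u) ≤ √n · α(u) for all u : ℓ₂ⁿ → X, and (2) β(ι_{1,2}ⁿ) · 1-π₂ⁿ(v*) ≤ √n · β(v) for all v : X → ℓ₂ⁿ. -/

import Mathlib

open MeasureTheory ProbabilityTheory

noncomputable section

/-- `ℓ₂ⁿ`. -/
abbrev l2n (n : ℕ) := EuclideanSpace ℝ (Fin n)
/-- `ℓ∞ⁿ` (i.e. `ℝⁿ` with the sup norm). -/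
abbrev linfn (n : ℕ) := Fin n → ℝ
/-- `ℓ₁ⁿ`. -/
abbrev l1n (n : ℕ) := PiLp 1 (fun _ : Fin n => ℝ)

/-- formal identity `ι_{2,∞}ⁿ : ℓ₂ⁿ → ℓ∞ⁿ`. -/
def iota2inf (n : ℕ) : l2n n →L[ℝ] linfn n :=
  (PiLp.continuousLinearEquiv 2 ℝ (fun _ : Fin n => ℝ)).toContinuousLinearMap

/-- formal identity `ι_{1,2}ⁿ : ℓ₁ⁿ → ℓ₂ⁿ`. -/
def iota12 (n : ℕ) : l1n n →L[ℝ] l2n n :=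
  ((PiLp.continuousLinearEquiv 2 ℝ (fun _ : Fin n => ℝ)).symm.toContinuousLinearMap).comp
    (PiLp.continuousLinearEquiv 1 ℝ (fun _ : Fin n => ℝ)).toContinuousLinearMap

/-- An ideal norm on `L(ℓ₂ⁿ, ·)`: a norm `α` on each component `L(ℓ₂ⁿ, X)` with
`‖TuA‖ ≤ α(TuA) ≤ ‖T‖ α(u) ‖A‖` and `α(a ⊗ x) = ‖a‖ ‖x‖`. -/
structure IdealNormDom (n : ℕ) where
  α : ∀ (X : Type) [NormedAddCommGroup X] [NormedSpace ℝ X] [CompleteSpace X],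
        (l2n n →L[ℝ] X) → ℝ
  add_le : ∀ (X : Type) [NormedAddCommGroup X] [NormedSpace ℝ X] [CompleteSpace X]
        (u v : l2n n →L[ℝ] X), α X (u + v) ≤ α X u + α X v
  smul_eq : ∀ (X : Type) [NormedAddCommGroup X] [NormedSpace ℝ X] [CompleteSpace X]
        (c : ℝ) (u : l2n n →L[ℝ] X), α X (c • u) = |c| * α X u
  eq_zero : ∀ (X : Type) [NormedAddCommGroup X] [NormedSpace ℝ X] [CompleteSpace X]
        (u : l2n n →L[ℝ] X), α X u = 0 → u = 0
  ideal_lower : ∀ (X Y : Type) [NormedAddCommGroup X] [NormedSpace ℝ X] [CompleteSpace X]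
        [NormedAddCommGroup Y] [NormedSpace ℝ Y] [CompleteSpace Y]
        (T : X →L[ℝ] Y) (u : l2n n →L[ℝ] X) (A : l2n n →L[ℝ] l2n n),
        ‖T.comp (u.comp A)‖ ≤ α Y (T.comp (u.comp A))
  ideal_upper : ∀ (X Y : Type) [NormedAddCommGroup X] [NormedSpace ℝ X] [CompleteSpace X]
        [NormedAddCommGroup Y] [NormedSpace ℝ Y] [CompleteSpace Y]
        (T : X →L[ℝ] Y) (u : l2n n →L[ℝ] X) (A : l2n n →L[ℝ] l2n n),
        α Y (T.comp (u.comp A)) ≤ ‖T‖ * α X u * ‖A‖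
  rank_one : ∀ (X : Type) [NormedAddCommGroup X] [NormedSpace ℝ X] [CompleteSpace X]
        (a : l2n n) (x : X), α X ((innerSL ℝ a).smulRight x) = ‖a‖ * ‖x‖

/-- An ideal norm on `L(·, ℓ₂ⁿ)`: a norm `β` on each component `L(Y, ℓ₂ⁿ)` with
`‖AvT‖ ≤ β(AvT) ≤ ‖A‖ β(v) ‖T‖` and `β(b ⊗ y) = ‖b‖ ‖y‖`. -/
structure IdealNormCod (n : ℕ) where
  β : ∀ (Y : Type) [NormedAddCommGroup Y] [NormedSpace ℝ Y] [CompleteSpace Y],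
        (Y →L[ℝ] l2n n) → ℝ
  add_le : ∀ (Y : Type) [NormedAddCommGroup Y] [NormedSpace ℝ Y] [CompleteSpace Y]
        (v w : Y →L[ℝ] l2n n), β Y (v + w) ≤ β Y v + β Y w
  smul_eq : ∀ (Y : Type) [NormedAddCommGroup Y] [NormedSpace ℝ Y] [CompleteSpace Y]
        (c : ℝ) (v : Y →L[ℝ] l2n n), β Y (c • v) = |c| * β Y v
  eq_zero : ∀ (Y : Type) [NormedAddCommGroup Y] [NormedSpace ℝ Y] [CompleteSpace Y]
        (v : Y →L[ℝ] l2n n), β Y v = 0 → v = 0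
  ideal_lower : ∀ (X Y : Type) [NormedAddCommGroup X] [NormedSpace ℝ X] [CompleteSpace X]
        [NormedAddCommGroup Y] [NormedSpace ℝ Y] [CompleteSpace Y]
        (A : l2n n →L[ℝ] l2n n) (v : Y →L[ℝ] l2n n) (T : X →L[ℝ] Y),
        ‖A.comp (v.comp T)‖ ≤ β X (A.comp (v.comp T))
  ideal_upper : ∀ (X Y : Type) [NormedAddCommGroup X] [NormedSpace ℝ X] [CompleteSpace X]
        [NormedAddCommGroup Y] [NormedSpace ℝ Y] [CompleteSpace Y]
        (A : l2n n →L[ℝ] l2n n) (v : Y →L[ℝ] l2n n) (T : X →L[ℝ] Y),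
        β X (A.comp (v.comp T)) ≤ ‖A‖ * β Y v * ‖T‖
  rank_one : ∀ (Y : Type) [NormedAddCommGroup Y] [NormedSpace ℝ Y] [CompleteSpace Y]
        (b : Y →L[ℝ] ℝ) (y : l2n n), β Y (b.smulRight y) = ‖b‖ * ‖y‖


/-- The weak-`ℓ₂` norm `sup_{‖a‖_{X*}≤1} (∑ |⟨x_i,a⟩|²)^{1/2}`. -/
def weakL2 {X : Type*} [NormedAddCommGroup X] [NormedSpace ℝ X] {m : ℕ}
    (x : Fin m → X) : ℝ :=
  ⨆ a : {a : X →L[ℝ] ℝ // ‖a‖ ≤ 1}, Real.sqrt (∑ i, (a.1 (x i)) ^ 2)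

/-- The absolutely 2-summing norm (of a map between normed spaces). -/
def pi2 {X Y : Type*} [NormedAddCommGroup X] [NormedSpace ℝ X]
    [NormedAddCommGroup Y] [NormedSpace ℝ Y] (T : X → Y) : ℝ :=
  sInf {c | 0 ≤ c ∧ ∀ (m : ℕ) (x : Fin m → X),
    Real.sqrt (∑ i, ‖T (x i)‖ ^ 2) ≤ c * weakL2 x}

/-- The equal-norm 2-summing constant `1-π₂ⁿ`. -/
def eqPi2n (n : ℕ) {X Y : Type*} [NormedAddCommGroup X] [NormedSpace ℝ X]
    [NormedAddCommGroup Y] [NormedSpace ℝ Y] (T : X → Y) : ℝ :=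
  sInf {c | 0 ≤ c ∧ ∀ x : Fin n → X, (∀ i j, ‖T (x i)‖ = ‖T (x j)‖) →
    Real.sqrt (∑ i, ‖T (x i)‖ ^ 2) ≤ c * weakL2 x}

/-- The adjoint of `v : X → ℓ₂ⁿ`, as a plain map `ℓ₂ⁿ → X*`. -/
def adjointCod {n : ℕ} {X : Type*} [NormedAddCommGroup X] [NormedSpace ℝ X]
    (v : X →L[ℝ] l2n n) : l2n n → (X →L[ℝ] ℝ) :=
  fun z => (innerSL ℝ z).comp v


/-! ### Auxiliary machinery -/

/-- sign of a Boolean. -/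
def sg (b : Bool) : ℝ := if b then 1 else -1
lemma sg_not (b : Bool) : sg (!b) = - sg b := by cases b <;> simp [sg]

lemma sum_sg (n : ℕ) (i j : Fin n) :
    ∑ ε : Fin n → Bool, sg (ε i) * sg (ε j) = if i = j then (2^n : ℝ) else 0 := by
  by_cases hij : i = j
  · subst hij
    simp only [if_pos rfl]
    have h1 : ∀ ε : Fin n → Bool, sg (ε i) * sg (ε i) = 1 := fun ε => by cases (ε i) <;> simp [sg]
    rw [Finset.sum_congr rfl (fun ε _ => h1 ε), Finset.sum_const]
    simp [Fintype.card_fun]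
  · rw [if_neg hij]
    apply Finset.sum_ninvolution (fun ε => Function.update ε j (!(ε j)))
    · intro ε
      rw [Function.update_of_ne hij, Function.update_self, sg_not]
      ring
    · intro ε _ heq
      have := congrFun heq j
      rw [Function.update_self] at this
      exact (Bool.not_ne_self (ε j)) this
    · intro ε; exact Finset.mem_univ _
    · intro ε
      funext k
      by_cases hk : k = j
      · subst hk; simp
      · simp [Function.update_of_ne hk]

/-- diagonal operator on `ℓ∞ⁿ`. -/
def diagInf (n : ℕ) (d : Fin n → ℝ) : linfn n →L[ℝ] linfn n :=
  ContinuousLinearMap.pi (fun i => d i • ContinuousLinearMap.proj i)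
lemma diagInf_apply (n : ℕ) (d : Fin n → ℝ) (x : linfn n) (i : Fin n) :
    diagInf n d x i = d i * x i := by simp [diagInf]

/-- diagonal operator on `ℓ₂ⁿ`. -/
def diagL2 (n : ℕ) (d : Fin n → ℝ) : l2n n →L[ℝ] l2n n :=
  ((PiLp.continuousLinearEquiv 2 ℝ (fun _ : Fin n => ℝ)).symm.toContinuousLinearMap).comp
    ((diagInf n d).comp (PiLp.continuousLinearEquiv 2 ℝ (fun _ : Fin n => ℝ)).toContinuousLinearMap)
lemma diagL2_apply (n : ℕ) (d : Fin n → ℝ) (x : l2n n) (i : Fin n) :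
    diagL2 n d x i = d i * x i := by simp [diagL2, diagInf]

/-- diagonal operator on `ℓ₁ⁿ`. -/
def diagL1 (n : ℕ) (d : Fin n → ℝ) : l1n n →L[ℝ] l1n n :=
  ((PiLp.continuousLinearEquiv 1 ℝ (fun _ : Fin n => ℝ)).symm.toContinuousLinearMap).comp
    ((diagInf n d).comp (PiLp.continuousLinearEquiv 1 ℝ (fun _ : Fin n => ℝ)).toContinuousLinearMap)
lemma diagL1_apply (n : ℕ) (d : Fin n → ℝ) (x : l1n n) (i : Fin n) :
    diagL1 n d x i = d i * x i := by simp [diagL1, diagInf]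

lemma diagInf_norm_le (n : ℕ) (d : Fin n → ℝ) (C : ℝ) (hC : 0 ≤ C) (h : ∀ i, |d i| ≤ C) :
    ‖diagInf n d‖ ≤ C := by
  refine ContinuousLinearMap.opNorm_le_bound _ hC (fun x => ?_)
  refine (pi_norm_le_iff_of_nonneg (by positivity)).2 (fun i => ?_)
  rw [diagInf_apply]
  calc ‖d i * x i‖ = |d i| * ‖x i‖ := by rw [Real.norm_eq_abs, abs_mul]; rfl
    _ ≤ C * ‖x‖ := mul_le_mul (h i) (norm_le_pi_norm x i) (norm_nonneg _) hC

lemma diagL2_norm_le (n : ℕ) (d : Fin n → ℝ) (C : ℝ) (hC : 0 ≤ C) (h : ∀ i, |d i| ≤ C) :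
    ‖diagL2 n d‖ ≤ C := by
  refine ContinuousLinearMap.opNorm_le_bound _ hC (fun x => ?_)
  rw [EuclideanSpace.norm_eq]
  rw [EuclideanSpace.norm_eq x, ← Real.sqrt_sq hC, ← Real.sqrt_mul (by positivity)]
  apply Real.sqrt_le_sqrt
  rw [Finset.mul_sum]
  apply Finset.sum_le_sum
  intro i _
  rw [diagL2_apply]
  have h2 : ‖d i * x i‖^2 = |d i|^2 * ‖x i‖^2 := by
    rw [Real.norm_eq_abs, abs_mul, mul_pow]; rfl
  rw [h2]
  have := h i
  have : |d i|^2 ≤ C^2 := by nlinarith [abs_nonneg (d i)]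
  nlinarith [sq_nonneg (‖x i‖), abs_nonneg (d i), sq_nonneg C]

lemma diagL1_norm_le (n : ℕ) (d : Fin n → ℝ) (C : ℝ) (hC : 0 ≤ C) (h : ∀ i, |d i| ≤ C) :
    ‖diagL1 n d‖ ≤ C := by
  refine ContinuousLinearMap.opNorm_le_bound _ hC (fun x => ?_)
  have key : ∀ y : l1n n, ‖y‖ = ∑ i, ‖y i‖ := fun y => by
    rw [PiLp.norm_eq_sum (by norm_num : 0 < (1:ENNReal).toReal)]
    simp
  have hn := key (diagL1 n d x)
  have hx := key x
  rw [hn, hx, Finset.mul_sum]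
  apply Finset.sum_le_sum
  intro i _
  rw [diagL1_apply]
  calc ‖d i * x i‖ = |d i| * ‖x i‖ := by rw [Real.norm_eq_abs, abs_mul]; rfl
    _ ≤ C * ‖x i‖ := mul_le_mul_of_nonneg_right (h i) (norm_nonneg _)

lemma le_weakL2 {X : Type*} [NormedAddCommGroup X] [NormedSpace ℝ X] {m : ℕ}
    (x : Fin m → X) (a : X →L[ℝ] ℝ) (ha : ‖a‖ ≤ 1) :
    Real.sqrt (∑ i, (a (x i)) ^ 2) ≤ weakL2 x := by
  apply le_ciSup (f := fun a : {a : X →L[ℝ] ℝ // ‖a‖ ≤ 1} => Real.sqrt (∑ i, (a.1 (x i)) ^ 2))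
    (c := ⟨a, ha⟩)
  refine ⟨Real.sqrt (∑ i, ‖x i‖ ^ 2), ?_⟩
  rintro r ⟨b, rfl⟩
  apply Real.sqrt_le_sqrt
  apply Finset.sum_le_sum
  intro i _
  have : |b.1 (x i)| ≤ ‖x i‖ := by
    calc |b.1 (x i)| = ‖b.1 (x i)‖ := rfl
      _ ≤ ‖b.1‖ * ‖x i‖ := b.1.le_opNorm _
      _ ≤ 1 * ‖x i‖ := mul_le_mul_of_nonneg_right b.2 (norm_nonneg _)
      _ = ‖x i‖ := one_mul _
  nlinarith [abs_nonneg (b.1 (x i)), sq_abs (b.1 (x i))]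

lemma weakL2_nonneg {X : Type*} [NormedAddCommGroup X] [NormedSpace ℝ X] {m : ℕ}
    (x : Fin m → X) : 0 ≤ weakL2 x :=
  le_trans (Real.sqrt_nonneg _) (le_weakL2 x 0 (by simp))

def Evec (n : ℕ) (j : Fin n) : l2n n := EuclideanSpace.single j (1:ℝ)

/-- operator on `ℓ₂ⁿ` with columns `x_j`. -/
def colOp (n : ℕ) (x : Fin n → l2n n) : l2n n →L[ℝ] l2n n :=
  ∑ j, (innerSL ℝ (Evec n j)).smulRight (x j)

lemma colOp_apply (n : ℕ) (x : Fin n → l2n n) (w : l2n n) :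
    colOp n x w = ∑ j, w j • x j := by
  simp [colOp, ContinuousLinearMap.sum_apply, Evec, EuclideanSpace.inner_single_left]

lemma colOp_norm_le (n : ℕ) (x : Fin n → l2n n) : ‖colOp n x‖ ≤ weakL2 x := by
  refine ContinuousLinearMap.opNorm_le_bound _ (weakL2_nonneg x) (fun w => ?_)
  rcases eq_or_ne (colOp n x w) 0 with h | h
  · rw [h, norm_zero]
    exact mul_nonneg (weakL2_nonneg x) (norm_nonneg _)
  · set q := colOp n x w with hq
    have hqn : 0 < ‖q‖ := norm_pos_iff.mpr h
    set a : l2n n := ‖q‖⁻¹ • q with ha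
    have han : ‖a‖ = 1 := by
      rw [ha, norm_smul, norm_inv, norm_norm, inv_mul_cancel₀ hqn.ne']
    have hfa : ‖innerSL ℝ a‖ ≤ 1 := by
      rw [innerSL_apply_norm]; exact le_of_eq han
    have key : ‖q‖ = ∑ j, w j * (innerSL ℝ a (x j)) := by
      have h0 : ‖q‖ = inner ℝ a q := by
        rw [ha, real_inner_smul_left, real_inner_self_eq_norm_sq]
        field_simp
      rw [h0, hq, colOp_apply, inner_sum]
      apply Finset.sum_congr rfl
      intro j _
      rw [real_inner_smul_right]
      rfl
    have cs : (∑ j, w j * (innerSL ℝ a (x j)))^2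
        ≤ (∑ j, (w j)^2) * (∑ j, (innerSL ℝ a (x j))^2) :=
      Finset.sum_mul_sq_le_sq_mul_sq Finset.univ _ _
    have hw : Real.sqrt (∑ j, (w j)^2) = ‖w‖ := by
      rw [EuclideanSpace.norm_eq]
      congr 1
      apply Finset.sum_congr rfl
      intro j _
      rw [Real.norm_eq_abs, sq_abs]
    have hphi : Real.sqrt (∑ j, (innerSL ℝ a (x j))^2) ≤ weakL2 x :=
      le_weakL2 x (innerSL ℝ a) hfa
    calc ‖q‖ = ∑ j, w j * (innerSL ℝ a (x j)) := key
      _ ≤ Real.sqrt ((∑ j, (w j)^2) * (∑ j, (innerSL ℝ a (x j))^2)) := by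
          have hS : 0 ≤ ∑ j, w j * (innerSL ℝ a (x j)) := key ▸ hqn.le
          calc ∑ j, w j * (innerSL ℝ a (x j))
              = Real.sqrt ((∑ j, w j * (innerSL ℝ a (x j)))^2) := (Real.sqrt_sq hS).symm
            _ ≤ _ := Real.sqrt_le_sqrt cs
      _ = Real.sqrt (∑ j, (w j)^2) * Real.sqrt (∑ j, (innerSL ℝ a (x j))^2) :=
          Real.sqrt_mul (by positivity) _
      _ ≤ ‖w‖ * weakL2 x := by
          rw [hw]
          exact mul_le_mul_of_nonneg_left hphi (norm_nonneg _)
      _ = weakL2 x * ‖w‖ := mul_comm _ _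

/-- operator on `ℓ₂ⁿ` with rows `z_i`. -/
def rowOp (n : ℕ) (z : Fin n → l2n n) : l2n n →L[ℝ] l2n n :=
  ∑ i, (innerSL ℝ (z i)).smulRight (Evec n i)

lemma rowOp_apply (n : ℕ) (z : Fin n → l2n n) (w : l2n n) (i : Fin n) :
    rowOp n z w i = innerSL ℝ (z i) w := by
  classical
  simp only [rowOp, ContinuousLinearMap.sum_apply, ContinuousLinearMap.smulRight_apply]
  rw [WithLp.ofLp_sum, Finset.sum_apply]
  rw [Finset.sum_eq_single i]
  · simp [Evec, EuclideanSpace.single_apply]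
  · intro j _ hj
    simp [Evec, EuclideanSpace.single_apply, hj]
  · simp

lemma rowOp_norm_le (n : ℕ) (z : Fin n → l2n n) : ‖rowOp n z‖ ≤ weakL2 z := by
  refine ContinuousLinearMap.opNorm_le_bound _ (weakL2_nonneg z) (fun w => ?_)
  rcases eq_or_ne w 0 with h | h
  · simp [h, mul_nonneg (weakL2_nonneg z) (norm_nonneg _)]
  · have hwn : 0 < ‖w‖ := norm_pos_iff.mpr h
    set a : l2n n := ‖w‖⁻¹ • w with ha
    have han : ‖a‖ = 1 := by
      rw [ha, norm_smul, norm_inv, norm_norm, inv_mul_cancel₀ hwn.ne']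
    have hfa : ‖innerSL ℝ a‖ ≤ 1 := by
      rw [innerSL_apply_norm]; exact le_of_eq han
    have hval : ∀ i, innerSL ℝ (z i) w = ‖w‖ * innerSL ℝ a (z i) := by
      intro i
      have h1 : (innerSL ℝ a) (z i) = ‖w‖⁻¹ * inner ℝ w (z i) := by
        simp [ha, real_inner_smul_left]
      rw [h1]
      have hsym : (innerSL ℝ (z i)) w = (inner ℝ w (z i) : ℝ) := by
        simp only [innerSL_apply_apply]
        exact real_inner_comm _ _
      rw [hsym]
      field_simp
    have hnorm : ‖rowOp n z w‖ = ‖w‖ * Real.sqrt (∑ i, (innerSL ℝ a (z i))^2) := by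
      rw [EuclideanSpace.norm_eq]
      have h2 : ∀ i, ‖rowOp n z w i‖^2 = ‖w‖^2 * (innerSL ℝ a (z i))^2 := by
        intro i
        rw [rowOp_apply, hval i, Real.norm_eq_abs, sq_abs, mul_pow]
      rw [Finset.sum_congr rfl (fun i _ => h2 i), ← Finset.mul_sum,
        Real.sqrt_mul (by positivity), Real.sqrt_sq hwn.le]
    rw [hnorm, mul_comm]
    exact mul_le_mul_of_nonneg_right (le_weakL2 z (innerSL ℝ a) hfa) hwn.le

lemma alpha_nonneg {n : ℕ} (A : IdealNormDom n) (X : Type) [NormedAddCommGroup X]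
    [NormedSpace ℝ X] [CompleteSpace X] (u : l2n n →L[ℝ] X) : 0 ≤ A.α X u := by
  have h := A.ideal_lower X X (ContinuousLinearMap.id ℝ X) u (ContinuousLinearMap.id ℝ (l2n n))
  simp only [ContinuousLinearMap.id_comp, ContinuousLinearMap.comp_id] at h
  exact le_trans (norm_nonneg _) h

lemma alpha_zero {n : ℕ} (A : IdealNormDom n) (X : Type) [NormedAddCommGroup X]
    [NormedSpace ℝ X] [CompleteSpace X] : A.α X 0 = 0 := by
  have h := A.smul_eq X 0 0
  have e : (0:ℝ) • (0 : l2n n →L[ℝ] X) = 0 := by ext w; simp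
  rw [e] at h
  simpa using h

lemma alpha_sum {n : ℕ} (A : IdealNormDom n) (X : Type) [NormedAddCommGroup X]
    [NormedSpace ℝ X] [CompleteSpace X] {ι : Type*} (s : Finset ι)
    (f : ι → (l2n n →L[ℝ] X)) : A.α X (∑ i ∈ s, f i) ≤ ∑ i ∈ s, A.α X (f i) := by
  classical
  induction s using Finset.induction with
  | empty => simp [alpha_zero A X]
  | insert _ _ hns ih =>
    rename_i a s
    rw [Finset.sum_insert hns, Finset.sum_insert hns]
    exact le_trans (A.add_le X _ _) (by linarith)

lemma beta_nonneg {n : ℕ} (B : IdealNormCod n) (Y : Type) [NormedAddCommGroup Y]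
    [NormedSpace ℝ Y] [CompleteSpace Y] (v : Y →L[ℝ] l2n n) : 0 ≤ B.β Y v := by
  have h := B.ideal_lower Y Y (ContinuousLinearMap.id ℝ (l2n n)) v (ContinuousLinearMap.id ℝ Y)
  simp only [ContinuousLinearMap.id_comp, ContinuousLinearMap.comp_id] at h
  exact le_trans (norm_nonneg _) h

lemma beta_zero {n : ℕ} (B : IdealNormCod n) (Y : Type) [NormedAddCommGroup Y]
    [NormedSpace ℝ Y] [CompleteSpace Y] : B.β Y 0 = 0 := by
  have h := B.smul_eq Y 0 0
  have e : (0:ℝ) • (0 : Y →L[ℝ] l2n n) = 0 := by ext w; simp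
  rw [e] at h
  simpa using h

lemma beta_sum {n : ℕ} (B : IdealNormCod n) (Y : Type) [NormedAddCommGroup Y]
    [NormedSpace ℝ Y] [CompleteSpace Y] {ι : Type*} (s : Finset ι)
    (f : ι → (Y →L[ℝ] l2n n)) : B.β Y (∑ i ∈ s, f i) ≤ ∑ i ∈ s, B.β Y (f i) := by
  classical
  induction s using Finset.induction with
  | empty => simp [beta_zero B Y]
  | insert _ _ hns ih =>
    rename_i a s
    rw [Finset.sum_insert hns, Finset.sum_insert hns]
    exact le_trans (B.add_le Y _ _) (by linarith)

lemma abs_sg (b : Bool) : |sg b| = 1 := by cases b <;> simp [sg]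

lemma iota2inf_apply (n : ℕ) (w : l2n n) (i : Fin n) : iota2inf n w i = w i := rfl

lemma part1_key {n : ℕ} (A : IdealNormDom n) (X : Type) [NormedAddCommGroup X]
    [NormedSpace ℝ X] [CompleteSpace X] (u : l2n n →L[ℝ] X)
    (x : Fin n → l2n n) (c : ℝ) (hc : 0 ≤ c) (hcx : ∀ i, ‖u (x i)‖ = c) :
    A.α (linfn n) (iota2inf n) * c ≤ A.α X u * weakL2 x := by
  classical
  choose b hb1 hb2 using fun i => exists_dual_vector'' ℝ (u (x i))
  set T : X →L[ℝ] linfn n := ContinuousLinearMap.pi b with hT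
  have hTn : ‖T‖ ≤ 1 := by
    refine ContinuousLinearMap.opNorm_le_bound _ zero_le_one (fun y => ?_)
    rw [one_mul]
    refine (pi_norm_le_iff_of_nonneg (norm_nonneg _)).2 (fun i => ?_)
    calc ‖T y i‖ = ‖b i y‖ := rfl
      _ ≤ ‖b i‖ * ‖y‖ := (b i).le_opNorm y
      _ ≤ 1 * ‖y‖ := mul_le_mul_of_nonneg_right (hb1 i) (norm_nonneg _)
      _ = ‖y‖ := one_mul _
  set Aop := colOp n x with hAop
  set M := T.comp (u.comp Aop) with hM
  have Bdiag : ∀ i, b i (u (x i)) = c := fun i => by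
    have h := hb2 i
    rw [hcx i] at h
    simpa using h
  have hMcoord : ∀ (w : l2n n) (i : Fin n), M w i = ∑ j, w j * (b i (u (x j))) := by
    intro w i
    have h0 : M w i = b i (u (Aop w)) := rfl
    rw [h0, hAop, colOp_apply, map_sum, map_sum]
    apply Finset.sum_congr rfl
    intro j _
    rw [u.map_smul, (b i).map_smul]
    simp
  have main : ∀ (i : Fin n) (w : l2n n),
      ∑ ε : Fin n → Bool, sg (ε i) * (∑ j, (sg (ε j) * w j) * (b i (u (x j))))
        = 2^n * (w i * c) := by
    intro i w
    calc ∑ ε : Fin n → Bool, sg (ε i) * (∑ j, (sg (ε j) * w j) * (b i (u (x j))))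
        = ∑ ε : Fin n → Bool, ∑ j, (w j * b i (u (x j))) * (sg (ε i) * sg (ε j)) := by
          refine Finset.sum_congr rfl fun ε _ => ?_
          rw [Finset.mul_sum]
          exact Finset.sum_congr rfl fun j _ => by ring
      _ = ∑ j, (w j * b i (u (x j))) * (∑ ε : Fin n → Bool, sg (ε i) * sg (ε j)) := by
          rw [Finset.sum_comm]
          exact Finset.sum_congr rfl fun j _ => (Finset.mul_sum _ _ _).symm
      _ = ∑ j, (w j * b i (u (x j))) * (if i = j then (2^n:ℝ) else 0) :=
          Finset.sum_congr rfl fun j _ => by rw [sum_sg]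
      _ = (w i * b i (u (x i))) * 2^n := by
          rw [Finset.sum_eq_single i]
          · simp
          · intro j _ hj
            rw [if_neg (fun hh => hj hh.symm), mul_zero]
          · intro hi; exact absurd (Finset.mem_univ i) hi
      _ = 2^n * (w i * c) := by rw [Bdiag i]; ring
  have identity : c • iota2inf n
      = ((2:ℝ)^n)⁻¹ • ∑ ε : Fin n → Bool,
          (diagInf n (fun k => sg (ε k))).comp (M.comp (diagL2 n (fun k => sg (ε k)))) := by
    apply ContinuousLinearMap.ext
    intro w
    funext i
    have hR : (((2:ℝ)^n)⁻¹ • ∑ ε : Fin n → Bool,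
          (diagInf n (fun k => sg (ε k))).comp (M.comp (diagL2 n (fun k => sg (ε k))))) w i
        = ((2:ℝ)^n)⁻¹ * ∑ ε : Fin n → Bool,
            sg (ε i) * (∑ j, (sg (ε j) * w j) * (b i (u (x j)))) := by
      rw [ContinuousLinearMap.smul_apply, ContinuousLinearMap.sum_apply]
      rw [Pi.smul_apply, smul_eq_mul, Finset.sum_apply]
      congr 1
      refine Finset.sum_congr rfl fun ε _ => ?_
      rw [ContinuousLinearMap.comp_apply, diagInf_apply]
      congr 1
      rw [ContinuousLinearMap.comp_apply, hMcoord]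
      exact Finset.sum_congr rfl fun j _ => by rw [diagL2_apply]
    have hL : (c • iota2inf n) w i = c * w i := by
      rw [ContinuousLinearMap.smul_apply, Pi.smul_apply, smul_eq_mul, iota2inf_apply]
    rw [hL, hR, main i w]
    have h2n : ((2:ℝ)^n) ≠ 0 := by positivity
    field_simp
  have hbound : ∀ ε : Fin n → Bool,
      A.α (linfn n) ((diagInf n (fun k => sg (ε k))).comp (M.comp (diagL2 n (fun k => sg (ε k)))))
        ≤ A.α X u * weakL2 x := by
    intro ε
    have assoc : (diagInf n (fun k => sg (ε k))).comp (M.comp (diagL2 n (fun k => sg (ε k))))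
        = ((diagInf n (fun k => sg (ε k))).comp T).comp
            (u.comp (Aop.comp (diagL2 n (fun k => sg (ε k))))) := by
      rw [hM]; ext w; rfl
    rw [assoc]
    have h1 := A.ideal_upper X (linfn n) ((diagInf n (fun k => sg (ε k))).comp T) u
      (Aop.comp (diagL2 n (fun k => sg (ε k))))
    have hTn2 : ‖(diagInf n (fun k => sg (ε k))).comp T‖ ≤ 1 := by
      calc ‖(diagInf n (fun k => sg (ε k))).comp T‖ ≤ ‖diagInf n (fun k => sg (ε k))‖ * ‖T‖ :=
            ContinuousLinearMap.opNorm_comp_le _ _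
        _ ≤ 1 * 1 := mul_le_mul (diagInf_norm_le n _ 1 zero_le_one (fun k => le_of_eq (abs_sg _)))
            hTn (norm_nonneg _) zero_le_one
        _ = 1 := one_mul 1
    have hAn2 : ‖Aop.comp (diagL2 n (fun k => sg (ε k)))‖ ≤ weakL2 x := by
      calc ‖Aop.comp (diagL2 n (fun k => sg (ε k)))‖
          ≤ ‖Aop‖ * ‖diagL2 n (fun k => sg (ε k))‖ := ContinuousLinearMap.opNorm_comp_le _ _
        _ ≤ weakL2 x * 1 := mul_le_mul (colOp_norm_le n x)
            (diagL2_norm_le n _ 1 zero_le_one (fun k => le_of_eq (abs_sg _)))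
            (norm_nonneg _) (weakL2_nonneg x)
        _ = weakL2 x := mul_one _
    calc A.α (linfn n) (((diagInf n (fun k => sg (ε k))).comp T).comp
            (u.comp (Aop.comp (diagL2 n (fun k => sg (ε k))))))
        ≤ ‖(diagInf n (fun k => sg (ε k))).comp T‖ * A.α X u
            * ‖Aop.comp (diagL2 n (fun k => sg (ε k)))‖ := h1
      _ ≤ 1 * A.α X u * weakL2 x := by
          apply mul_le_mul _ hAn2 (norm_nonneg _)
            (mul_nonneg zero_le_one (alpha_nonneg A X u))
          exact mul_le_mul_of_nonneg_right hTn2 (alpha_nonneg A X u)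
      _ = A.α X u * weakL2 x := by rw [one_mul]
  have final : A.α (linfn n) (c • iota2inf n) ≤ A.α X u * weakL2 x := by
    rw [identity, A.smul_eq]
    have hsum : A.α (linfn n) (∑ ε : Fin n → Bool,
        (diagInf n (fun k => sg (ε k))).comp (M.comp (diagL2 n (fun k => sg (ε k)))))
        ≤ 2^n * (A.α X u * weakL2 x) := by
      refine le_trans (alpha_sum A (linfn n) Finset.univ _) ?_
      refine le_trans (Finset.sum_le_sum (fun ε _ => hbound ε)) ?_
      rw [Finset.sum_const]
      have hcard : (Finset.univ : Finset (Fin n → Bool)).card = 2^n := by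
        simp [Fintype.card_fun]
      rw [hcard, nsmul_eq_mul]
      push_cast
      exact le_rfl
    have habs : |((2:ℝ)^n)⁻¹| = ((2:ℝ)^n)⁻¹ := abs_of_nonneg (by positivity)
    rw [habs]
    have hstep := mul_le_mul_of_nonneg_left hsum (by positivity : (0:ℝ) ≤ ((2:ℝ)^n)⁻¹)
    have e2 : ((2:ℝ)^n)⁻¹ * ((2:ℝ)^n * (A.α X u * weakL2 x)) = A.α X u * weakL2 x := by
      have h2n : ((2:ℝ)^n) ≠ 0 := by positivity
      field_simp
    exact le_trans hstep (le_of_eq e2)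
  have hsm : A.α (linfn n) (c • iota2inf n) = c * A.α (linfn n) (iota2inf n) := by
    rw [A.smul_eq, abs_of_nonneg hc]
  rw [mul_comm (A.α (linfn n) (iota2inf n)) c, ← hsm]
  exact final

def coord1 (n : ℕ) (j : Fin n) : l1n n →L[ℝ] ℝ :=
  (ContinuousLinearMap.proj j).comp
    (PiLp.continuousLinearEquiv 1 ℝ (fun _ : Fin n => ℝ)).toContinuousLinearMap

lemma coord1_apply (n : ℕ) (j : Fin n) (w : l1n n) : coord1 n j w = w j := rfl

lemma iota12_apply (n : ℕ) (w : l1n n) (i : Fin n) : iota12 n w i = w i := rfl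

lemma part2_key {n : ℕ} (B : IdealNormCod n) (X : Type) [NormedAddCommGroup X]
    [NormedSpace ℝ X] [CompleteSpace X] (v : X →L[ℝ] l2n n)
    (z : Fin n → l2n n) (t : ℝ) (ht : 0 < t)
    (htc : ∀ i, t < ‖adjointCod v (z i)‖) :
    B.β (l1n n) (iota12 n) * t ≤ B.β X v * weakL2 z := by
  classical
  have hch : ∀ i, ∃ y : X, ‖y‖ ≤ 1 ∧ t < (adjointCod v (z i)) y := by
    intro i
    obtain ⟨y, hy1, hy2⟩ := (adjointCod v (z i)).exists_lt_apply_of_lt_opNorm (htc i)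
    by_cases hsign : 0 ≤ (adjointCod v (z i)) y
    · exact ⟨y, hy1.le, by rwa [Real.norm_eq_abs, abs_of_nonneg hsign] at hy2⟩
    · refine ⟨-y, by simpa using hy1.le, ?_⟩
      rw [map_neg]
      rwa [Real.norm_eq_abs, abs_of_neg (not_le.mp hsign)] at hy2
  choose yy hyy1 hyy2 using hch
  set d : Fin n → ℝ := fun i => (adjointCod v (z i)) (yy i) with hd
  have hdt : ∀ i, t < d i := hyy2
  have hdpos : ∀ i, 0 < d i := fun i => lt_trans ht (hdt i)
  set T1 : l1n n →L[ℝ] X := ∑ j, (coord1 n j).smulRight (yy j) with hT1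
  have hT1a : ∀ w : l1n n, T1 w = ∑ j, w j • yy j := by
    intro w
    rw [hT1]
    simp [ContinuousLinearMap.sum_apply, coord1_apply]
  have hT1n : ‖T1‖ ≤ 1 := by
    refine ContinuousLinearMap.opNorm_le_bound _ zero_le_one (fun w => ?_)
    rw [one_mul, hT1a]
    have hw1 : ‖w‖ = ∑ i, ‖w i‖ := by
      rw [PiLp.norm_eq_sum (by norm_num : 0 < (1:ENNReal).toReal)]
      simp
    rw [hw1]
    refine le_trans (norm_sum_le _ _) ?_
    apply Finset.sum_le_sum
    intro j _
    rw [norm_smul]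
    calc ‖w j‖ * ‖yy j‖ ≤ ‖w j‖ * 1 := mul_le_mul_of_nonneg_left (hyy1 j) (norm_nonneg _)
      _ = ‖w j‖ := mul_one _
  set Aop2 := rowOp n z with hAop2
  set M2 := Aop2.comp (v.comp T1) with hM2
  have hC : ∀ i, innerSL ℝ (z i) (v (yy i)) = d i := fun i => rfl
  have hM2coord : ∀ (w : l1n n) (i : Fin n),
      M2 w i = ∑ j, w j * (innerSL ℝ (z i) (v (yy j))) := by
    intro w i
    have h0 : M2 w i = innerSL ℝ (z i) (v (T1 w)) := by
      rw [hM2]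
      rw [ContinuousLinearMap.comp_apply, ContinuousLinearMap.comp_apply, hAop2, rowOp_apply]
    rw [h0, hT1a, map_sum, map_sum]
    apply Finset.sum_congr rfl
    intro j _
    rw [v.map_smul, (innerSL ℝ (z i)).map_smul]
    simp
  have main : ∀ (i : Fin n) (w : l1n n),
      ∑ ε : Fin n → Bool, sg (ε i) * (∑ j, (sg (ε j) * w j) * (innerSL ℝ (z i) (v (yy j))))
        = 2^n * (w i * d i) := by
    intro i w
    calc ∑ ε : Fin n → Bool, sg (ε i) * (∑ j, (sg (ε j) * w j) * (innerSL ℝ (z i) (v (yy j))))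
        = ∑ ε : Fin n → Bool, ∑ j, (w j * (innerSL ℝ (z i) (v (yy j)))) * (sg (ε i) * sg (ε j)) := by
          refine Finset.sum_congr rfl fun ε _ => ?_
          rw [Finset.mul_sum]
          exact Finset.sum_congr rfl fun j _ => by ring
      _ = ∑ j, (w j * (innerSL ℝ (z i) (v (yy j)))) * (∑ ε : Fin n → Bool, sg (ε i) * sg (ε j)) := by
          rw [Finset.sum_comm]
          exact Finset.sum_congr rfl fun j _ => (Finset.mul_sum _ _ _).symm
      _ = ∑ j, (w j * (innerSL ℝ (z i) (v (yy j)))) * (if i = j then (2^n:ℝ) else 0) :=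
          Finset.sum_congr rfl fun j _ => by rw [sum_sg]
      _ = (w i * (innerSL ℝ (z i) (v (yy i)))) * 2^n := by
          rw [Finset.sum_eq_single i]
          · simp
          · intro j _ hj
            rw [if_neg (fun hh => hj hh.symm), mul_zero]
          · intro hi; exact absurd (Finset.mem_univ i) hi
      _ = 2^n * (w i * d i) := by rw [hC i]; ring
  have identity : (diagL2 n d).comp (iota12 n)
      = ((2:ℝ)^n)⁻¹ • ∑ ε : Fin n → Bool,
          (diagL2 n (fun k => sg (ε k))).comp (M2.comp (diagL1 n (fun k => sg (ε k)))) := by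
    apply ContinuousLinearMap.ext
    intro w
    ext i
    have hR : (((2:ℝ)^n)⁻¹ • ∑ ε : Fin n → Bool,
          (diagL2 n (fun k => sg (ε k))).comp (M2.comp (diagL1 n (fun k => sg (ε k))))) w i
        = ((2:ℝ)^n)⁻¹ * ∑ ε : Fin n → Bool,
            sg (ε i) * (∑ j, (sg (ε j) * w j) * (innerSL ℝ (z i) (v (yy j)))) := by
      rw [ContinuousLinearMap.smul_apply, ContinuousLinearMap.sum_apply]
      rw [PiLp.smul_apply, smul_eq_mul, WithLp.ofLp_sum, Finset.sum_apply]
      congr 1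
      refine Finset.sum_congr rfl fun ε _ => ?_
      rw [ContinuousLinearMap.comp_apply, diagL2_apply]
      congr 1
      rw [ContinuousLinearMap.comp_apply, hM2coord]
      exact Finset.sum_congr rfl fun j _ => by rw [diagL1_apply]
    have hL : ((diagL2 n d).comp (iota12 n)) w i = d i * w i := by
      rw [ContinuousLinearMap.comp_apply, diagL2_apply, iota12_apply]
    rw [hL, hR, main i w]
    have h2n : ((2:ℝ)^n) ≠ 0 := by positivity
    field_simp
  have hbound : ∀ ε : Fin n → Bool,
      B.β (l1n n) ((diagL2 n (fun k => sg (ε k))).comp (M2.comp (diagL1 n (fun k => sg (ε k)))))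
        ≤ weakL2 z * B.β X v := by
    intro ε
    have assoc : (diagL2 n (fun k => sg (ε k))).comp (M2.comp (diagL1 n (fun k => sg (ε k))))
        = ((diagL2 n (fun k => sg (ε k))).comp Aop2).comp
            (v.comp (T1.comp (diagL1 n (fun k => sg (ε k))))) := by
      rw [hM2]; ext w; rfl
    rw [assoc]
    have h1 := B.ideal_upper (l1n n) X ((diagL2 n (fun k => sg (ε k))).comp Aop2) v
      (T1.comp (diagL1 n (fun k => sg (ε k))))
    have hAn2 : ‖(diagL2 n (fun k => sg (ε k))).comp Aop2‖ ≤ weakL2 z := by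
      calc ‖(diagL2 n (fun k => sg (ε k))).comp Aop2‖
          ≤ ‖diagL2 n (fun k => sg (ε k))‖ * ‖Aop2‖ := ContinuousLinearMap.opNorm_comp_le _ _
        _ ≤ 1 * weakL2 z := mul_le_mul
            (diagL2_norm_le n _ 1 zero_le_one (fun k => le_of_eq (abs_sg _)))
            (rowOp_norm_le n z) (norm_nonneg _) zero_le_one
        _ = weakL2 z := one_mul _
    have hTn2 : ‖T1.comp (diagL1 n (fun k => sg (ε k)))‖ ≤ 1 := by
      calc ‖T1.comp (diagL1 n (fun k => sg (ε k)))‖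
          ≤ ‖T1‖ * ‖diagL1 n (fun k => sg (ε k))‖ := ContinuousLinearMap.opNorm_comp_le _ _
        _ ≤ 1 * 1 := mul_le_mul hT1n
            (diagL1_norm_le n _ 1 zero_le_one (fun k => le_of_eq (abs_sg _)))
            (norm_nonneg _) zero_le_one
        _ = 1 := one_mul 1
    calc B.β (l1n n) (((diagL2 n (fun k => sg (ε k))).comp Aop2).comp
            (v.comp (T1.comp (diagL1 n (fun k => sg (ε k))))))
        ≤ ‖(diagL2 n (fun k => sg (ε k))).comp Aop2‖ * B.β X v
            * ‖T1.comp (diagL1 n (fun k => sg (ε k)))‖ := h1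
      _ ≤ weakL2 z * B.β X v * 1 := by
          apply mul_le_mul _ hTn2 (norm_nonneg _)
            (mul_nonneg (weakL2_nonneg z) (beta_nonneg B X v))
          exact mul_le_mul_of_nonneg_right hAn2 (beta_nonneg B X v)
      _ = weakL2 z * B.β X v := mul_one _
  have hup : B.β (l1n n) ((diagL2 n d).comp (iota12 n)) ≤ weakL2 z * B.β X v := by
    rw [identity, B.smul_eq]
    have hsum : B.β (l1n n) (∑ ε : Fin n → Bool,
        (diagL2 n (fun k => sg (ε k))).comp (M2.comp (diagL1 n (fun k => sg (ε k)))))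
        ≤ 2^n * (weakL2 z * B.β X v) := by
      refine le_trans (beta_sum B (l1n n) Finset.univ _) ?_
      refine le_trans (Finset.sum_le_sum (fun ε _ => hbound ε)) ?_
      rw [Finset.sum_const]
      have hcard : (Finset.univ : Finset (Fin n → Bool)).card = 2^n := by
        simp [Fintype.card_fun]
      rw [hcard, nsmul_eq_mul]
      push_cast
      exact le_rfl
    have habs : |((2:ℝ)^n)⁻¹| = ((2:ℝ)^n)⁻¹ := abs_of_nonneg (by positivity)
    rw [habs]
    have hstep := mul_le_mul_of_nonneg_left hsum (by positivity : (0:ℝ) ≤ ((2:ℝ)^n)⁻¹)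
    have e2 : ((2:ℝ)^n)⁻¹ * ((2:ℝ)^n * (weakL2 z * B.β X v)) = weakL2 z * B.β X v := by
      have h2n : ((2:ℝ)^n) ≠ 0 := by positivity
      field_simp
    exact le_trans hstep (le_of_eq e2)
  have hdown : B.β (l1n n) (iota12 n) * t ≤ B.β (l1n n) ((diagL2 n d).comp (iota12 n)) := by
    have recon : iota12 n = (diagL2 n (fun i => (d i)⁻¹)).comp
        ((((diagL2 n d).comp (iota12 n))).comp (ContinuousLinearMap.id ℝ (l1n n))) := by
      apply ContinuousLinearMap.ext
      intro w
      ext i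
      rw [ContinuousLinearMap.comp_apply, diagL2_apply, ContinuousLinearMap.comp_apply,
        ContinuousLinearMap.coe_id', id_eq, ContinuousLinearMap.comp_apply, diagL2_apply,
        iota12_apply]
      rw [inv_mul_cancel_left₀ (hdpos i).ne']
    have h1 := B.ideal_upper (l1n n) (l1n n) (diagL2 n (fun i => (d i)⁻¹))
      ((diagL2 n d).comp (iota12 n)) (ContinuousLinearMap.id ℝ (l1n n))
    have hDinv : ‖diagL2 n (fun i => (d i)⁻¹)‖ ≤ t⁻¹ := by
      apply diagL2_norm_le n _ _ (by positivity)
      intro i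
      rw [abs_of_nonneg (inv_nonneg.mpr (hdpos i).le)]
      exact inv_anti₀ ht (hdt i).le
    have hid : ‖ContinuousLinearMap.id ℝ (l1n n)‖ ≤ 1 := ContinuousLinearMap.norm_id_le
    have h2 : B.β (l1n n) (iota12 n) ≤ t⁻¹ * B.β (l1n n) ((diagL2 n d).comp (iota12 n)) := by
      have e := congrArg (B.β (l1n n)) recon
      rw [e]
      refine le_trans h1 ?_
      have hbnn := beta_nonneg B (l1n n) ((diagL2 n d).comp (iota12 n))
      calc ‖diagL2 n (fun i => (d i)⁻¹)‖ * B.β (l1n n) ((diagL2 n d).comp (iota12 n))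
            * ‖ContinuousLinearMap.id ℝ (l1n n)‖
          ≤ t⁻¹ * B.β (l1n n) ((diagL2 n d).comp (iota12 n)) * 1 := by
            apply mul_le_mul _ hid (norm_nonneg _)
              (mul_nonneg (by positivity) hbnn)
            exact mul_le_mul_of_nonneg_right hDinv hbnn
        _ = t⁻¹ * B.β (l1n n) ((diagL2 n d).comp (iota12 n)) := mul_one _
    calc B.β (l1n n) (iota12 n) * t
        ≤ (t⁻¹ * B.β (l1n n) ((diagL2 n d).comp (iota12 n))) * t :=
          mul_le_mul_of_nonneg_right h2 ht.le
      _ = B.β (l1n n) ((diagL2 n d).comp (iota12 n)) := by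
          field_simp
  calc B.β (l1n n) (iota12 n) * t ≤ B.β (l1n n) ((diagL2 n d).comp (iota12 n)) := hdown
    _ ≤ weakL2 z * B.β X v := hup
    _ = B.β X v * weakL2 z := mul_comm _ _

/-- **Lemma 1.3.** (1) `α(ι_{2,∞}ⁿ) · 1-π₂ⁿ(u) ≤ √n · α(u)`;
(2) `β(ι_{1,2}ⁿ) · 1-π₂ⁿ(v*) ≤ √n · β(v)`. -/
theorem ideal_norm_eqPi2n (n : ℕ) (A : IdealNormDom n) (B : IdealNormCod n) :
    (∀ (X : Type) [NormedAddCommGroup X] [NormedSpace ℝ X] [CompleteSpace X]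
      (u : l2n n →L[ℝ] X),
        A.α (linfn n) (iota2inf n) * eqPi2n n (⇑u) ≤ Real.sqrt n * A.α X u) ∧
    (∀ (X : Type) [NormedAddCommGroup X] [NormedSpace ℝ X] [CompleteSpace X]
      (v : X →L[ℝ] l2n n),
        B.β (l1n n) (iota12 n) * eqPi2n n (adjointCod v) ≤ Real.sqrt n * B.β X v) := by
  constructor
  · intro X _ _ _ u
    have hK0 : 0 ≤ A.α (linfn n) (iota2inf n) := alpha_nonneg A (linfn n) (iota2inf n)
    have hαu : 0 ≤ A.α X u := alpha_nonneg A X u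
    rcases eq_or_lt_of_le hK0 with hKz | hKpos
    · have hnn : 0 ≤ eqPi2n n (⇑u) := by
        apply Real.sInf_nonneg
        rintro r ⟨hr, -⟩
        exact hr
      rw [← hKz, zero_mul]
      exact mul_nonneg (Real.sqrt_nonneg _) hαu
    · set K := A.α (linfn n) (iota2inf n) with hK
      set c0 := Real.sqrt n * A.α X u / K with hc0def
      have hc0 : 0 ≤ c0 := div_nonneg (mul_nonneg (Real.sqrt_nonneg _) hαu) hKpos.le
      have hle : eqPi2n n (⇑u) ≤ c0 := by
        refine csInf_le ⟨0, fun r hr => hr.1⟩ ⟨hc0, fun x hx => ?_⟩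
        rcases Nat.eq_zero_or_pos n with hn | hn
        · subst hn
          simp only [Finset.univ_eq_empty, Finset.sum_empty, Real.sqrt_zero]
          exact mul_nonneg hc0 (weakL2_nonneg x)
        · set i0 : Fin n := ⟨0, hn⟩
          set c := ‖u (x i0)‖ with hc
          have hcx : ∀ i, ‖u (x i)‖ = c := fun i => hx i i0
          have key := part1_key A X u x c (norm_nonneg _) hcx
          have hsq : Real.sqrt (∑ i, ‖u (x i)‖^2) = Real.sqrt n * c := by
            rw [Finset.sum_congr rfl (fun i _ => by rw [hcx i])]
            rw [Finset.sum_const, Finset.card_univ, Fintype.card_fin, nsmul_eq_mul,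
              Real.sqrt_mul (Nat.cast_nonneg n), Real.sqrt_sq (norm_nonneg _)]
          rw [hsq]
          have hfe : Real.sqrt n * c = Real.sqrt n * (K * c) / K := by
            field_simp
          rw [hfe, hc0def]
          have hre : Real.sqrt n * A.α X u / K * weakL2 x
              = Real.sqrt n * (A.α X u * weakL2 x) / K := by ring
          rw [hre]
          have h1 : Real.sqrt n * (K * c) ≤ Real.sqrt n * (A.α X u * weakL2 x) :=
            mul_le_mul_of_nonneg_left key (Real.sqrt_nonneg _)
          gcongr
      calc K * eqPi2n n (⇑u) ≤ K * c0 := mul_le_mul_of_nonneg_left hle hKpos.le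
        _ = Real.sqrt n * A.α X u := by
            rw [hc0def]
            field_simp
  · intro X _ _ _ v
    have hK0 : 0 ≤ B.β (l1n n) (iota12 n) := beta_nonneg B (l1n n) (iota12 n)
    have hβv : 0 ≤ B.β X v := beta_nonneg B X v
    rcases eq_or_lt_of_le hK0 with hKz | hKpos
    · have hnn : 0 ≤ eqPi2n n (adjointCod v) := by
        apply Real.sInf_nonneg
        rintro r ⟨hr, -⟩
        exact hr
      rw [← hKz, zero_mul]
      exact mul_nonneg (Real.sqrt_nonneg _) hβv
    · set K := B.β (l1n n) (iota12 n) with hK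
      set c0 := Real.sqrt n * B.β X v / K with hc0def
      have hc0 : 0 ≤ c0 := div_nonneg (mul_nonneg (Real.sqrt_nonneg _) hβv) hKpos.le
      have hle : eqPi2n n (adjointCod v) ≤ c0 := by
        refine csInf_le ⟨0, fun r hr => hr.1⟩ ⟨hc0, fun z hz => ?_⟩
        rcases Nat.eq_zero_or_pos n with hn | hn
        · subst hn
          simp only [Finset.univ_eq_empty, Finset.sum_empty, Real.sqrt_zero]
          exact mul_nonneg hc0 (weakL2_nonneg z)
        · set i0 : Fin n := ⟨0, hn⟩
          set c := ‖adjointCod v (z i0)‖ with hc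
          have hcz : ∀ i, ‖adjointCod v (z i)‖ = c := fun i => hz i i0
          have key : K * c ≤ B.β X v * weakL2 z := by
            by_contra hcon
            push_neg at hcon
            have hR0 : 0 ≤ B.β X v * weakL2 z := mul_nonneg hβv (weakL2_nonneg z)
            have hcpos : 0 < c := by
              rcases lt_or_ge 0 c with h | h
              · exact h
              · exfalso
                have : K * c ≤ 0 := mul_nonpos_of_nonneg_of_nonpos hKpos.le h
                linarith
            have hdiv : B.β X v * weakL2 z / K < c := by
              rw [div_lt_iff₀ hKpos]
              linarith [hcon]
            obtain ⟨t, ht1, ht2⟩ := exists_between hdiv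
            have ht0 : 0 < t := lt_of_le_of_lt (div_nonneg hR0 hKpos.le) ht1
            have hkey := part2_key B X v z t ht0 (fun i => by rw [hcz i]; exact ht2)
            have : B.β X v * weakL2 z < K * t := by
              rw [← div_lt_iff₀' hKpos]
              exact ht1
            rw [mul_comm K t] at this
            rw [mul_comm (B.β (l1n n) (iota12 n)) t] at hkey
            linarith
          have hsq : Real.sqrt (∑ i, ‖adjointCod v (z i)‖^2) = Real.sqrt n * c := by
            rw [Finset.sum_congr rfl (fun i _ => by rw [hcz i])]
            rw [Finset.sum_const, Finset.card_univ, Fintype.card_fin, nsmul_eq_mul,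
              Real.sqrt_mul (Nat.cast_nonneg n), Real.sqrt_sq (norm_nonneg _)]
          rw [hsq]
          have hfe : Real.sqrt n * c = Real.sqrt n * (K * c) / K := by
            field_simp
          rw [hfe, hc0def]
          have hre : Real.sqrt n * B.β X v / K * weakL2 z
              = Real.sqrt n * (B.β X v * weakL2 z) / K := by ring
          rw [hre]
          have h1 : Real.sqrt n * (K * c) ≤ Real.sqrt n * (B.β X v * weakL2 z) :=
            mul_le_mul_of_nonneg_left key (Real.sqrt_nonneg _)
          gcongr
      calc K * eqPi2n n (adjointCod v) ≤ K * c0 := mul_le_mul_of_nonneg_left hle hKpos.le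
        _ = Real.sqrt n * B.β X v := by
            rw [hc0def]
            field_simp


end
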